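/- The one-sided derivative at c = 0 of the shortening savings function c ↦ Sh(c, φ) equals 2 − (3/2)·B − (1/2)·√(4 − 3B²), where B = (2/√3)·sin(φ/2); moreover this quantity is strictly positive for 0 < φ < 2π/3. -/

import Mathlib

open Real Filter

private lemma aux_mono (α β : ℝ) (hα : 0 < α) (hβ : 0 < β) :
    StrictMonoOn (fun t => α * Real.cosh t + β * Real.sinh t) (Set.Ici 0) := by
  apply strictMonoOn_of_deriv_pos (convex_Ici 0)
  · exact ((continuous_const.mul Real.continuous_cosh).add
      (continuous_const.mul Real.continuous_sinh)).continuousOn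
  · intro t ht
    rw [interior_Ici] at ht
    have hd : HasDerivAt (fun t => α * Real.cosh t + β * Real.sinh t)
        (α * Real.sinh t + β * Real.cosh t) t :=
      ((Real.hasDerivAt_cosh t).const_mul α).add ((Real.hasDerivAt_sinh t).const_mul β)
    rw [hd.deriv]
    have h1 : 0 < Real.sinh t := Real.sinh_pos_iff.mpr ht
    have h2 : 0 < Real.cosh t := Real.cosh_pos t
    positivity

private lemma aux_eq (B S K sc cb sb : ℝ) (hsb : sb = B * sc)
    (hcb2 : cb ^ 2 = (B * sc) ^ 2 + 1) (hcc2 : K ^ 2 = sc ^ 2 + 1)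
    (hS2 : S ^ 2 = 4 - 3 * B ^ 2)
    (hQpos : 0 < cb + 1 / 2 * sb)
    (x : ℝ) (hx : x = (K + S / 2 * sc) / (cb + 1 / 2 * sb)) (hx0 : 0 < x) :
    K = (x + x⁻¹) / 2 * cb + (1 / 2) * ((x - x⁻¹) / 2) * sb := by
  subst hsb
  have hQ : cb + 1 / 2 * (B * sc) ≠ 0 := ne_of_gt hQpos
  have hxQ : x * (cb + 1 / 2 * (B * sc)) = K + S / 2 * sc := by
    rw [hx]; exact div_mul_cancel₀ _ hQ
  have hquad : (cb + 1 / 2 * (B * sc)) * x ^ 2 - 2 * K * x + (cb - 1 / 2 * (B * sc)) = 0 := by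
    have h1 : ((cb + 1 / 2 * (B * sc)) * x ^ 2 - 2 * K * x + (cb - 1 / 2 * (B * sc)))
        * (cb + 1 / 2 * (B * sc)) = 0 := by
      linear_combination (x * (cb + 1 / 2 * (B * sc)) + (K + S / 2 * sc) - 2 * K) * hxQ
        + (sc ^ 2 / 4) * hS2 + hcb2 - hcc2
    exact (mul_eq_zero.mp h1).resolve_right hQ
  have hx0' : x ≠ 0 := ne_of_gt hx0
  have hxx : x * x⁻¹ = 1 := mul_inv_cancel₀ hx0'
  have hmain : K * (4 * x)
      = ((x + x⁻¹) / 2 * cb + (1 / 2) * ((x - x⁻¹) / 2) * (B * sc)) * (4 * x) := by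
    linear_combination (-2 : ℝ) * hquad + (B * sc - 2 * cb) * hxx
  exact mul_right_cancel₀ (by positivity) hmain

set_option maxHeartbeats 1000000 in
/-- The one-sided derivative at `c = 0` of the shortening savings function
`c ↦ Sh(c,φ) = 2c - 2 b(c) - a(c)`, where `b(c) = arsinh (B * sinh c)` with
`B = (2/√3) * sin (φ/2)` (hyperbolic law of sines) and `a(c) ≥ 0` is determined by the
hyperbolic law of cosines `cosh c = cosh (a c) * cosh (b c) + (1/2) * sinh (a c) * sinh (b c)`,
equals `2 - (3/2) B - (1/2) √(4 - 3 B²)`; since `Sh(0,φ) = 0`, this derivative is the limit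
of `Sh(c,φ)/c` as `c → 0⁺`. Moreover this quantity is strictly positive for `0 < φ < 2π/3`. -/
theorem shortening_deriv_at_zero (φ : ℝ) (hφ : φ ∈ Set.Ioo 0 (2 * π / 3))
    (B : ℝ) (hB : B = (2 / Real.sqrt 3) * Real.sin (φ / 2))
    (a b Sh : ℝ → ℝ)
    (hb : ∀ c, b c = Real.arsinh (B * Real.sinh c))
    (ha_pos : ∀ c, 0 < c → 0 ≤ a c)
    (hcos : ∀ c, 0 < c →
      Real.cosh c = Real.cosh (a c) * Real.cosh (b c)
        + (1 / 2) * Real.sinh (a c) * Real.sinh (b c))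
    (hSh : ∀ c, Sh c = 2 * c - 2 * b c - a c) :
    Tendsto (fun c => Sh c / c) (nhdsWithin 0 (Set.Ioi 0))
        (nhds (2 - (3 / 2) * B - (1 / 2) * Real.sqrt (4 - 3 * B ^ 2))) ∧
      0 < 2 - (3 / 2) * B - (1 / 2) * Real.sqrt (4 - 3 * B ^ 2) := by
  obtain ⟨hφ1, hφ2⟩ := hφ
  have hπ : 0 < π := Real.pi_pos
  have h3 : (0:ℝ) < Real.sqrt 3 := Real.sqrt_pos.mpr (by norm_num)
  have hB0 : 0 < B := by
    rw [hB]
    apply mul_pos (by positivity)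
    exact Real.sin_pos_of_pos_of_lt_pi (by linarith) (by linarith)
  have hB1 : B < 1 := by
    have hsin : Real.sin (φ / 2) < Real.sin (π / 3) := by
      apply Real.strictMonoOn_sin
      · constructor <;> [linarith; linarith]
      · constructor <;> [linarith; linarith]
      · linarith
    rw [Real.sin_pi_div_three] at hsin
    have h2 : (0:ℝ) < 2 / Real.sqrt 3 := by positivity
    have := mul_lt_mul_of_pos_left hsin h2
    rw [hB]
    calc 2 / Real.sqrt 3 * Real.sin (φ / 2) < 2 / Real.sqrt 3 * (Real.sqrt 3 / 2) := this
      _ = 1 := by field_simp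
  set S := Real.sqrt (4 - 3 * B ^ 2) with hSdef
  have h4 : (0:ℝ) < 4 - 3 * B ^ 2 := by nlinarith
  have hS2 : S ^ 2 = 4 - 3 * B ^ 2 := Real.sq_sqrt h4.le
  have hS0 : 0 < S := Real.sqrt_pos.mpr h4
  have hBS : B ≤ S := by nlinarith
  have hpos : 0 < 2 - (3 / 2) * B - (1 / 2) * S := by
    nlinarith [sq_nonneg (1 - B)]
  -- the explicit solution for a
  set g : ℝ → ℝ := fun c =>
    Real.log (Real.cosh c + S / 2 * Real.sinh c)
      - Real.log (Real.cosh (b c) + 1 / 2 * Real.sinh (b c)) with hg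
  have key : ∀ c, 0 < c → a c = g c := by
    intro c hc
    have hsc : 0 < Real.sinh c := Real.sinh_pos_iff.mpr hc
    have hsb : Real.sinh (b c) = B * Real.sinh c := by rw [hb]; exact Real.sinh_arsinh _
    have hsb0 : 0 < Real.sinh (b c) := by rw [hsb]; positivity
    have hcb0 : 0 < Real.cosh (b c) := Real.cosh_pos _
    have hcb2 : Real.cosh (b c) ^ 2 = (B * Real.sinh c) ^ 2 + 1 := by
      rw [← hsb]; exact Real.cosh_sq (b c)
    have hcc2 : Real.cosh c ^ 2 = Real.sinh c ^ 2 + 1 := Real.cosh_sq c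
    have hcc0 : 0 < Real.cosh c := Real.cosh_pos c
    have hQpos : 0 < Real.cosh (b c) + 1 / 2 * Real.sinh (b c) := by positivity
    have hPpos : 0 < Real.cosh c + S / 2 * Real.sinh c := by positivity
    have hQleP : Real.cosh (b c) + 1 / 2 * Real.sinh (b c)
        ≤ Real.cosh c + S / 2 * Real.sinh c := by
      have hB2 : B ^ 2 ≤ 1 := by nlinarith
      have hsq : Real.cosh (b c) ^ 2 ≤ Real.cosh c ^ 2 := by
        nlinarith [sq_nonneg (Real.sinh c)]
      have h1 : Real.cosh (b c) ≤ Real.cosh c := by nlinarith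
      have h2 : 1 / 2 * Real.sinh (b c) ≤ S / 2 * Real.sinh c := by
        rw [hsb]; nlinarith
      linarith
    have hg0 : 0 ≤ g c := sub_nonneg.mpr (Real.log_le_log hQpos hQleP)
    have hexp : Real.exp (g c)
        = (Real.cosh c + S / 2 * Real.sinh c)
          / (Real.cosh (b c) + 1 / 2 * Real.sinh (b c)) := by
      rw [hg]
      simp only
      rw [Real.exp_sub, Real.exp_log hPpos, Real.exp_log hQpos]
    have heq : Real.cosh c = Real.cosh (g c) * Real.cosh (b c)
        + (1 / 2) * Real.sinh (g c) * Real.sinh (b c) := by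
      have hcg : Real.cosh (g c) = (Real.exp (g c) + (Real.exp (g c))⁻¹) / 2 := by
        rw [Real.cosh_eq, Real.exp_neg]
      have hsg : Real.sinh (g c) = (Real.exp (g c) - (Real.exp (g c))⁻¹) / 2 := by
        rw [Real.sinh_eq, Real.exp_neg]
      rw [hcg, hsg]
      exact aux_eq B S (Real.cosh c) (Real.sinh c) (Real.cosh (b c)) (Real.sinh (b c))
        hsb hcb2 hcc2 hS2 hQpos (Real.exp (g c)) hexp (Real.exp_pos _)
    -- uniqueness via strict monotonicity
    have hmono := aux_mono (Real.cosh (b c)) (1 / 2 * Real.sinh (b c)) hcb0 (by positivity)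
    apply hmono.injOn (Set.mem_Ici.mpr (ha_pos c hc)) (Set.mem_Ici.mpr hg0)
    simp only
    have h1 := hcos c hc
    linear_combination heq - h1
  -- derivative computation
  have hbderiv : HasDerivAt (fun c => Real.arsinh (B * Real.sinh c)) B 0 := by
    have h1 : HasDerivAt (fun c => B * Real.sinh c) (B * Real.cosh 0) 0 :=
      (Real.hasDerivAt_sinh 0).const_mul B
    have h2 := (Real.hasDerivAt_arsinh (B * Real.sinh 0)).comp 0 h1
    simpa [Real.sinh_zero, Real.cosh_zero, Function.comp_def] using h2
  have hlogP : HasDerivAt (fun c => Real.log (Real.cosh c + S / 2 * Real.sinh c)) (S / 2) 0 := by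
    have hP : HasDerivAt (fun c => Real.cosh c + S / 2 * Real.sinh c)
        (Real.sinh 0 + S / 2 * Real.cosh 0) 0 :=
      (Real.hasDerivAt_cosh 0).add ((Real.hasDerivAt_sinh 0).const_mul (S / 2))
    have := hP.log (by simp)
    simpa using this
  have hlogQ : HasDerivAt
      (fun c => Real.log (Real.cosh (Real.arsinh (B * Real.sinh c))
        + 1 / 2 * Real.sinh (Real.arsinh (B * Real.sinh c)))) (B / 2) 0 := by
    have houter : HasDerivAt (fun t => Real.cosh t + 1 / 2 * Real.sinh t)
        (Real.sinh (Real.arsinh (B * Real.sinh 0))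
          + 1 / 2 * Real.cosh (Real.arsinh (B * Real.sinh 0)))
        (Real.arsinh (B * Real.sinh 0)) :=
      (Real.hasDerivAt_cosh _).add ((Real.hasDerivAt_sinh _).const_mul (1 / 2))
    have hcomp := houter.comp 0 hbderiv
    have hlog := hcomp.log (by simp)
    convert hlog using 1
    · rfl
    simp only [Function.comp_apply, Real.sinh_zero, mul_zero, Real.arsinh_zero,
      Real.cosh_zero]
    ring
  set F : ℝ → ℝ := fun c => 2 * c - 2 * Real.arsinh (B * Real.sinh c)
    - (Real.log (Real.cosh c + S / 2 * Real.sinh c)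
      - Real.log (Real.cosh (Real.arsinh (B * Real.sinh c))
        + 1 / 2 * Real.sinh (Real.arsinh (B * Real.sinh c)))) with hF
  have hFderiv : HasDerivAt F (2 - (3 / 2) * B - (1 / 2) * S) 0 := by
    have h1 : HasDerivAt (fun c : ℝ => 2 * c) 2 0 := by
      simpa using (hasDerivAt_id (0:ℝ)).const_mul 2
    have h2 := (h1.sub (hbderiv.const_mul 2)).sub (hlogP.sub hlogQ)
    rw [show 2 - (3 / 2) * B - (1 / 2) * S = 2 - 2 * B - (S / 2 - B / 2) by ring]
    exact h2
  have hF0 : F 0 = 0 := by simp [hF]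
  have hslope := hasDerivAt_iff_tendsto_slope.mp hFderiv
  have h1 : Tendsto (slope F 0) (nhdsWithin 0 (Set.Ioi 0))
      (nhds (2 - (3 / 2) * B - (1 / 2) * S)) := by
    apply hslope.mono_left
    apply nhdsWithin_mono
    intro x hx
    exact ne_of_gt hx
  refine ⟨h1.congr' ?_, hpos⟩
  filter_upwards [self_mem_nhdsWithin] with c hc
  have hc' : (0:ℝ) < c := hc
  rw [slope_def_field, hF0, sub_zero, sub_zero]
  congr 1
  rw [hSh, key c hc']
  simp only [hF, hg, hb]
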